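/- If π/3 < θ < π, then the vector w₊ = (1,0,0; 0,e^{-2πi/3},0; 0,0,e^{2πi/3}) lies in the kernel of ϱ_{b,θ} for every b > 0. -/

import Mathlib

open Matrix Complex

noncomputable def pTheta (θ : ℝ) : ℝ :=
  max (max (2 * Real.cos (θ - 2 * Real.pi / 3)) (2 * Real.cos θ))
    (2 * Real.cos (θ + 2 * Real.pi / 3))

noncomputable def rho (b θ : ℝ) : Matrix (Fin 9) (Fin 9) ℂ :=
  let p : ℂ := (pTheta θ : ℂ)
  let e : ℂ := Complex.exp (θ * Complex.I)
  let f : ℂ := Complex.exp (-θ * Complex.I)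
  !![p, 0, 0, 0, -e, 0, 0, 0, -f;
     0, 1/(b:ℂ), 0, -f, 0, 0, 0, 0, 0;
     0, 0, (b:ℂ), 0, 0, 0, -e, 0, 0;
     0, -e, 0, (b:ℂ), 0, 0, 0, 0, 0;
     -f, 0, 0, 0, p, 0, 0, 0, -e;
     0, 0, 0, 0, 0, 1/(b:ℂ), 0, -f, 0;
     0, 0, -f, 0, 0, 0, 1/(b:ℂ), 0, 0;
     0, 0, 0, 0, 0, -e, 0, (b:ℂ), 0;
     -e, 0, 0, 0, -f, 0, 0, 0, p]

lemma pTheta_eq (θ : ℝ) (h1 : Real.pi / 3 < θ) (h2 : θ < Real.pi) :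
    pTheta θ = 2 * Real.cos (θ - 2 * Real.pi / 3) := by
  have pi_pos := Real.pi_pos
  have habs : |θ - 2 * Real.pi / 3| < Real.pi / 3 := by
    rw [abs_lt]; constructor <;> linarith
  have hmid : Real.cos (Real.pi / 3) < Real.cos (θ - 2 * Real.pi / 3) := by
    rw [← Real.cos_abs (θ - 2 * Real.pi / 3)]
    exact Real.cos_lt_cos_of_nonneg_of_le_pi (abs_nonneg _) (by linarith) habs
  have hc1 : Real.cos θ < Real.cos (θ - 2 * Real.pi / 3) := by
    have : Real.cos θ < Real.cos (Real.pi / 3) :=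
      Real.cos_lt_cos_of_nonneg_of_le_pi (by positivity) (le_of_lt h2) h1
    linarith
  have hc2 : Real.cos (θ + 2 * Real.pi / 3) < Real.cos (θ - 2 * Real.pi / 3) := by
    have e1 : Real.cos (θ + 2 * Real.pi / 3) = Real.cos (θ - 4 * Real.pi / 3) := by
      rw [show θ + 2 * Real.pi / 3 = (θ - 4 * Real.pi / 3) + 2 * Real.pi by ring,
        Real.cos_add_two_pi]
    have e2 : Real.cos (θ - 4 * Real.pi / 3) = Real.cos (4 * Real.pi / 3 - θ) := by
      rw [← Real.cos_neg]; ring_nf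
    have e3 : Real.cos (4 * Real.pi / 3 - θ) < Real.cos (Real.pi / 3) :=
      Real.cos_lt_cos_of_nonneg_of_le_pi (by positivity) (by linarith) (by linarith)
    linarith
  unfold pTheta
  have m1 : max (2 * Real.cos (θ - 2 * Real.pi / 3)) (2 * Real.cos θ)
      = 2 * Real.cos (θ - 2 * Real.pi / 3) := max_eq_left (by linarith)
  rw [m1, max_eq_left (by linarith)]

lemma two_cos_eq (x : ℂ) :
    2 * Complex.cos x = Complex.exp (x * Complex.I) + Complex.exp (-x * Complex.I) := by
  rw [Complex.exp_mul_I, show (-x) * Complex.I = (-x) * Complex.I by ring,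
    Complex.exp_mul_I, Complex.cos_neg, Complex.sin_neg]
  ring

theorem stmt9 (b θ : ℝ) (hb : 0 < b) (h1 : Real.pi / 3 < θ) (h2 : θ < Real.pi) :
    (rho b θ).mulVec
      ![1, 0, 0, 0, Complex.exp (-(2 * Real.pi / 3) * Complex.I), 0, 0, 0,
        Complex.exp ((2 * Real.pi / 3) * Complex.I)] = 0 := by
  set e : ℂ := Complex.exp (θ * Complex.I) with he
  set u : ℂ := Complex.exp ((2 * (Real.pi:ℂ) / 3) * Complex.I) with hu
  have hf : Complex.exp (-θ * Complex.I) = e⁻¹ := by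
    rw [he, ← Complex.exp_neg]; ring_nf
  have huinv : Complex.exp (-(2 * (Real.pi:ℂ) / 3) * Complex.I) = u⁻¹ := by
    rw [hu, ← Complex.exp_neg]; ring_nf
  have hu3 : u ^ 3 = 1 := by
    rw [hu, ← Complex.exp_nat_mul,
      show (3 : ℕ) * ((2 * (Real.pi:ℂ) / 3) * Complex.I) = 2 * (Real.pi:ℂ) * Complex.I by
        push_cast; ring]
    exact Complex.exp_two_pi_mul_I
  have hu0 : u ≠ 0 := Complex.exp_ne_zero _
  have he0 : e ≠ 0 := Complex.exp_ne_zero _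
  have hu2 : u⁻¹ = u ^ 2 := by
    have : u * u ^ 2 = 1 := by rw [← pow_succ']; exact hu3
    exact inv_eq_of_mul_eq_one_right this
  have hee : e * e⁻¹ = 1 := mul_inv_cancel₀ he0
  have hp : (pTheta θ : ℂ) = e * u ^ 2 + e⁻¹ * u := by
    rw [pTheta_eq θ h1 h2]
    push_cast [Complex.ofReal_cos]
    rw [two_cos_eq]
    have a1 : Complex.exp (((θ:ℂ) - 2 * (Real.pi:ℂ) / 3) * Complex.I) = e * u⁻¹ := by
      rw [he, ← huinv, ← Complex.exp_add]; ring_nf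
    have a2 : Complex.exp (-((θ:ℂ) - 2 * (Real.pi:ℂ) / 3) * Complex.I) = e⁻¹ * u := by
      rw [← hf, hu, ← Complex.exp_add]; ring_nf
    rw [a1, a2, hu2]
  have hred : (rho b θ).mulVec
      ![1, 0, 0, 0, u⁻¹, 0, 0, 0, u] = 0 := by
    rw [rho]
    simp only [hf, huinv, hu2, hp]
    simp only [Matrix.cons_mulVec, Matrix.cons_dotProduct, Matrix.dotProduct_of_isEmpty,
      Matrix.head_cons, Matrix.tail_cons, Matrix.empty_mulVec, add_zero, mul_zero,
      mul_one, zero_mul, zero_add, one_mul]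
    simp only [← he, Matrix.cons_eq_zero_iff, Matrix.zero_empty, and_true, true_and,
      eq_self_iff_true, and_self]
    refine ⟨by ring, ?_, ?_⟩
    · linear_combination (e * u + e⁻¹) * hu3
    · linear_combination e * hu3
  rw [show -(2 * Real.pi / 3) * Complex.I = -(2 * (Real.pi:ℂ) / 3) * Complex.I by push_cast; ring,
    huinv]
  exact hred
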